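/- Let s: ℝⁿ → ℝ be locally log-Hölder continuous with constant C_log(s), and let d ≥ C_log(s) and m > 0. Then there is a constant C such that for all x, y ∈ ℝⁿ and all v ∈ ℕ, 2^{v s(x)} η_{v,m+d}(x−y) ≤ C · 2^{v s(y)} η_{v,m}(x−y). Consequently, for every nonnegative measurable f, 2^{v s(x)} (η_{v,m+d} ∗ f)(x) ≤ C (η_{v,m} ∗ (2^{v s(·)} f))(x) for all x ∈ ℝⁿ. -/
import Mathlib


open MeasureTheory Real
open scoped ENNReal

noncomputable section

lemma core_div (r : ℝ) (hr : 0 < r) (v : ℕ) :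
    (v : ℝ) * Real.log 2 / Real.log (Real.exp 1 + 1 / r) ≤
      1 + Real.log (1 + 2 ^ v * r) := by
  have hr' : 0 < 1 / r := by positivity
  set a := (v : ℝ) * Real.log 2 with ha
  set b := Real.log (1 / r) with hb
  set L := Real.log (Real.exp 1 + 1 / r) with hL
  set t := Real.log (1 + 2 ^ v * r) with htdef
  have hL1 : 1 ≤ L := by
    rw [hL, ← Real.log_exp 1]
    exact Real.log_le_log (Real.exp_pos 1) (by simp [Real.log_exp]; linarith)
  have hL0 : 0 < L := lt_of_lt_of_le one_pos hL1
  have ha0 : 0 ≤ a := mul_nonneg (Nat.cast_nonneg v) (Real.log_nonneg one_le_two)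
  have hbL : b ≤ L := Real.log_le_log hr' (by linarith [Real.exp_pos 1])
  have ht0 : 0 ≤ t := Real.log_nonneg (le_add_of_nonneg_right (by positivity))
  have hpow : Real.log ((2:ℝ) ^ v) = a := by rw [Real.log_pow]
  rcases le_or_gt ((2:ℝ) ^ v * r) 1 with hc | hc
  · have h2v : (2:ℝ) ^ v ≤ 1 / r := (le_div_iff₀ hr).2 hc
    have haL : a ≤ L := by
      rw [← hpow]
      exact le_trans (Real.log_le_log (by positivity) h2v) hbL
    have : a / L ≤ 1 := (div_le_one hL0).2 haL
    linarith
  · have hab : b ≤ a := by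
      rw [← hpow]
      exact Real.log_le_log hr' ((div_le_iff₀ hr).2 hc.le)
    have hlogmul : Real.log ((2:ℝ) ^ v * r) = a - b := by
      rw [Real.log_mul (by positivity) (ne_of_gt hr), hpow, hb, Real.log_div one_ne_zero (ne_of_gt hr), Real.log_one]
      ring
    have ht : a - b ≤ t := by
      rw [← hlogmul]
      exact Real.log_le_log (by positivity) (by linarith)
    rcases le_or_gt b 1 with hb1 | hb1
    · have : a / L ≤ a := div_le_self ha0 hL1
      linarith
    · have hb0 : 0 < b := lt_trans one_pos hb1
      have h1 : a / L ≤ a / b := div_le_div_of_nonneg_left ha0 hb0 hbL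
      have h2 : a / b ≤ 1 + (a - b) := by
        rw [div_le_iff₀ hb0]
        nlinarith [mul_nonneg (sub_nonneg.2 hab) (sub_nonneg.2 hb1.le)]
      linarith

lemma exp_two_bound (Clog d : ℝ) (hClog : 0 < Clog) (hd : Clog ≤ d)
    (r δ : ℝ) (hr : 0 < r) (hδ : δ ≤ Clog / Real.log (Real.exp 1 + 1 / r)) (v : ℕ) :
    (2 : ℝ) ^ ((v : ℝ) * δ) ≤ Real.exp Clog * (1 + 2 ^ v * r) ^ d := by
  set L := Real.log (Real.exp 1 + 1 / r) with hL
  set t := Real.log (1 + 2 ^ v * r) with ht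
  have hr' : 0 < 1 / r := by positivity
  have hL1 : 1 ≤ L := by
    rw [hL, ← Real.log_exp 1]
    exact Real.log_le_log (Real.exp_pos 1) (by simp [Real.log_exp]; linarith)
  have hL0 : 0 < L := lt_of_lt_of_le one_pos hL1
  have ha0 : 0 ≤ (v : ℝ) * Real.log 2 := mul_nonneg (Nat.cast_nonneg v) (Real.log_nonneg one_le_two)
  have ht0 : 0 ≤ t := Real.log_nonneg (le_add_of_nonneg_right (by positivity))
  have hB0 : (0:ℝ) < 1 + 2 ^ v * r := by positivity
  have hcore : (v : ℝ) * Real.log 2 / L ≤ 1 + t := core_div r hr v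
  rw [Real.rpow_def_of_pos (by norm_num : (0:ℝ) < 2), Real.rpow_def_of_pos hB0, ← Real.exp_add]
  apply Real.exp_le_exp.2
  have h1 : (v : ℝ) * Real.log 2 * δ ≤ (v : ℝ) * Real.log 2 * (Clog / L) :=
    mul_le_mul_of_nonneg_left hδ ha0
  have h3 : (v : ℝ) * Real.log 2 * (Clog / L) = Clog * ((v : ℝ) * Real.log 2 / L) := by ring
  have h4 : Clog * ((v : ℝ) * Real.log 2 / L) ≤ Clog * (1 + t) :=
    mul_le_mul_of_nonneg_left hcore hClog.le
  have h5 : Clog * t ≤ d * t := mul_le_mul_of_nonneg_right hd ht0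
  nlinarith


/-- The kernel `η_{v,m}(z) = 2^{vn}(1+2^v|z|)^{−m}`. -/
def eta {n : ℕ} (v : ℕ) (m : ℝ) (z : EuclideanSpace ℝ (Fin n)) : ℝ :=
  (2 : ℝ) ^ (v * n) * (1 + (2 : ℝ) ^ v * ‖z‖) ^ (-m)

/-- Let `s : ℝⁿ → ℝ` be bounded and locally log-Hölder continuous
with constant `C_log(s)`, `d ≥ C_log(s)` and `m > 0`. Then there is `C > 0` such
that for all `x, y ∈ ℝⁿ` and `v ∈ ℕ`,
`2^{vs(x)} η_{v,m+d}(x−y) ≤ C 2^{vs(y)} η_{v,m}(x−y)`; consequently, for every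
nonnegative measurable `f`,
`2^{vs(x)} (η_{v,m+d} ∗ f)(x) ≤ C (η_{v,m} ∗ (2^{vs(·)} f))(x)`. -/
theorem eta_logHolder_weight_swap {n : ℕ}
    (s : EuclideanSpace ℝ (Fin n) → ℝ) (hs_bdd : ∃ M : ℝ, ∀ x, |s x| ≤ M)
    (Clog : ℝ) (hClog : 0 < Clog)
    (hs_log : ∀ x y : EuclideanSpace ℝ (Fin n), x ≠ y →
      |s x - s y| ≤ Clog / Real.log (Real.exp 1 + 1 / dist x y))
    (d m : ℝ) (hd : Clog ≤ d) (hm : 0 < m) :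
    ∃ C : ℝ, 0 < C ∧
      (∀ (x y : EuclideanSpace ℝ (Fin n)) (v : ℕ), 1 ≤ v →
        (2 : ℝ) ^ ((v : ℝ) * s x) * eta v (m + d) (x - y)
          ≤ C * (2 : ℝ) ^ ((v : ℝ) * s y) * eta v m (x - y)) ∧
      (∀ (f : EuclideanSpace ℝ (Fin n) → ℝ≥0∞), Measurable f →
        ∀ (x : EuclideanSpace ℝ (Fin n)) (v : ℕ), 1 ≤ v →
          ENNReal.ofReal ((2 : ℝ) ^ ((v : ℝ) * s x)) *
              ∫⁻ y, ENNReal.ofReal (eta v (m + d) (x - y)) * f y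
            ≤ ENNReal.ofReal C *
              ∫⁻ y, ENNReal.ofReal (eta v m (x - y)) *
                (ENNReal.ofReal ((2 : ℝ) ^ ((v : ℝ) * s y)) * f y)) := by
  have hptw : ∀ (x y : EuclideanSpace ℝ (Fin n)) (v : ℕ),
      (2 : ℝ) ^ ((v : ℝ) * s x) * eta v (m + d) (x - y)
        ≤ Real.exp Clog * (2 : ℝ) ^ ((v : ℝ) * s y) * eta v m (x - y) := by
    intro x y v
    have hkey : ∀ x y : EuclideanSpace ℝ (Fin n),
        (2 : ℝ) ^ ((v : ℝ) * (s x - s y)) * (1 + (2:ℝ) ^ v * ‖x - y‖) ^ (-d)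
          ≤ Real.exp Clog := by
      intro x y
      by_cases hxy : x = y
      · subst hxy
        simp [Real.rpow_natCast]
        exact hClog.le
      · have hr : 0 < dist x y := dist_pos.2 hxy
        have hδ : s x - s y ≤ Clog / Real.log (Real.exp 1 + 1 / dist x y) :=
          le_trans (le_abs_self _) (hs_log x y hxy)
        have h := exp_two_bound Clog d hClog hd (dist x y) (s x - s y) hr hδ v
        have hB0 : (0:ℝ) < 1 + (2:ℝ) ^ v * dist x y := by positivity
        have hBd : (0:ℝ) < (1 + (2:ℝ) ^ v * dist x y) ^ d := Real.rpow_pos_of_pos hB0 d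
        rw [show ‖x - y‖ = dist x y from (dist_eq_norm x y).symm,
          Real.rpow_neg hB0.le, ← div_eq_mul_inv, div_le_iff₀ hBd]
        exact h
    have hB0 : (0:ℝ) < 1 + (2:ℝ) ^ v * ‖x - y‖ := by positivity
    have h2 : (2 : ℝ) ^ ((v : ℝ) * s x)
        = (2 : ℝ) ^ ((v : ℝ) * s y) * (2 : ℝ) ^ ((v : ℝ) * (s x - s y)) := by
      rw [← Real.rpow_add two_pos]; ring_nf
    have hBsplit : (1 + (2:ℝ) ^ v * ‖x - y‖) ^ (-(m + d))
        = (1 + (2:ℝ) ^ v * ‖x - y‖) ^ (-m) * (1 + (2:ℝ) ^ v * ‖x - y‖) ^ (-d) := by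
      rw [← Real.rpow_add hB0]; ring_nf
    simp only [eta]
    rw [h2, hBsplit]
    have hnn : (0:ℝ) ≤ (2 : ℝ) ^ ((v : ℝ) * s y) * ((2:ℝ) ^ (v * n) *
        (1 + (2:ℝ) ^ v * ‖x - y‖) ^ (-m)) := by positivity
    calc (2 : ℝ) ^ ((v : ℝ) * s y) * (2 : ℝ) ^ ((v : ℝ) * (s x - s y)) *
          ((2:ℝ) ^ (v * n) * ((1 + (2:ℝ) ^ v * ‖x - y‖) ^ (-m) *
            (1 + (2:ℝ) ^ v * ‖x - y‖) ^ (-d)))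
        = ((2 : ℝ) ^ ((v : ℝ) * s y) * ((2:ℝ) ^ (v * n) *
            (1 + (2:ℝ) ^ v * ‖x - y‖) ^ (-m))) *
          ((2 : ℝ) ^ ((v : ℝ) * (s x - s y)) * (1 + (2:ℝ) ^ v * ‖x - y‖) ^ (-d)) := by
          ring
      _ ≤ ((2 : ℝ) ^ ((v : ℝ) * s y) * ((2:ℝ) ^ (v * n) *
            (1 + (2:ℝ) ^ v * ‖x - y‖) ^ (-m))) * Real.exp Clog :=
          mul_le_mul_of_nonneg_left (hkey x y) hnn
      _ = Real.exp Clog * (2 : ℝ) ^ ((v : ℝ) * s y) *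
          ((2:ℝ) ^ (v * n) * (1 + (2:ℝ) ^ v * ‖x - y‖) ^ (-m)) := by ring
  refine ⟨Real.exp Clog, Real.exp_pos _, fun x y v _ => hptw x y v, ?_⟩
  intro f hf x v hv
  have hpt : ∀ y : EuclideanSpace ℝ (Fin n),
      (2 : ℝ) ^ ((v : ℝ) * s x) * eta v (m + d) (x - y)
        ≤ Real.exp Clog * (2 : ℝ) ^ ((v : ℝ) * s y) * eta v m (x - y) :=
    fun y => hptw x y v
  calc ENNReal.ofReal ((2 : ℝ) ^ ((v : ℝ) * s x)) *
          ∫⁻ y, ENNReal.ofReal (eta v (m + d) (x - y)) * f y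
        = ∫⁻ y, ENNReal.ofReal ((2 : ℝ) ^ ((v : ℝ) * s x)) *
            (ENNReal.ofReal (eta v (m + d) (x - y)) * f y) :=
          (lintegral_const_mul' _ _ ENNReal.ofReal_ne_top).symm
      _ ≤ ∫⁻ y, ENNReal.ofReal (Real.exp Clog) *
            (ENNReal.ofReal (eta v m (x - y)) *
              (ENNReal.ofReal ((2 : ℝ) ^ ((v : ℝ) * s y)) * f y)) := by
          apply lintegral_mono
          intro y
          have h : ENNReal.ofReal ((2 : ℝ) ^ ((v : ℝ) * s x)) *
              ENNReal.ofReal (eta v (m + d) (x - y))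
              ≤ ENNReal.ofReal (Real.exp Clog) *
                ENNReal.ofReal ((2 : ℝ) ^ ((v : ℝ) * s y)) *
                ENNReal.ofReal (eta v m (x - y)) := by
            rw [← ENNReal.ofReal_mul (by positivity),
              ← ENNReal.ofReal_mul (Real.exp_pos _).le,
              ← ENNReal.ofReal_mul (by positivity)]
            exact ENNReal.ofReal_le_ofReal (hpt y)
          calc ENNReal.ofReal ((2 : ℝ) ^ ((v : ℝ) * s x)) *
                (ENNReal.ofReal (eta v (m + d) (x - y)) * f y)
              = (ENNReal.ofReal ((2 : ℝ) ^ ((v : ℝ) * s x)) *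
                  ENNReal.ofReal (eta v (m + d) (x - y))) * f y := by ring
            _ ≤ (ENNReal.ofReal (Real.exp Clog) *
                  ENNReal.ofReal ((2 : ℝ) ^ ((v : ℝ) * s y)) *
                  ENNReal.ofReal (eta v m (x - y))) * f y :=
                mul_le_mul_left h _
            _ = ENNReal.ofReal (Real.exp Clog) *
                  (ENNReal.ofReal (eta v m (x - y)) *
                    (ENNReal.ofReal ((2 : ℝ) ^ ((v : ℝ) * s y)) * f y)) := by ring
      _ = ENNReal.ofReal (Real.exp Clog) *
          ∫⁻ y, ENNReal.ofReal (eta v m (x - y)) *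
            (ENNReal.ofReal ((2 : ℝ) ^ ((v : ℝ) * s y)) * f y) :=
          lintegral_const_mul' _ _ ENNReal.ofReal_ne_top
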